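/- Let ε > 0, γ̄ > 0 and 0 < μ ≤ γ̄, and set δ = (e^ε − 1) / ( 2 ( e^{ε γ̄ / μ} − 1 ) ). Let k be a positive integer and let γ be a random vector in ℝ^k with independent coordinates each distributed according to the truncated Laplacian density p(γ) = (ε / (2μ(1 − e^{−εγ̄/μ}))) e^{−ε|γ|/μ} on [−γ̄, γ̄] (and 0 outside). Then for every pair θ, θ' ∈ ℝ^k that differ in at most one coordinate and satisfy ‖θ − θ'‖_1 ≤ μ, and for every Borel set S ⊆ ℝ^k, P( θ + γ ∈ S ) ≤ e^ε · P( θ' + γ ∈ S ) + δ. -/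

import Mathlib

open MeasureTheory ProbabilityTheory Finset

/-- The probability density function of the truncated Laplacian distribution with
scale `μ/ε`, truncated to the interval `[-γ̄, γ̄]`. -/
noncomputable def truncLapPDF (ε μ γbar : ℝ) (x : ℝ) : ℝ :=
  if |x| ≤ γbar then ε / (2 * μ * (1 - Real.exp (-(ε * γbar) / μ))) * Real.exp (-(ε * |x|) / μ)
  else 0

lemma tlExpLt (ε μ γbar : ℝ) (hε : 0 < ε) (hμ : 0 < μ) (hμγ : μ ≤ γbar) :
    Real.exp (-(ε * γbar) / μ) < 1 := by
  rw [Real.exp_lt_one_iff, neg_div, neg_lt_zero]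
  have : 0 < γbar := lt_of_lt_of_le hμ hμγ
  positivity

lemma tlC_pos (ε μ γbar : ℝ) (hε : 0 < ε) (hμ : 0 < μ) (hμγ : μ ≤ γbar) :
    0 < ε / (2 * μ * (1 - Real.exp (-(ε * γbar) / μ))) := by
  have h := tlExpLt ε μ γbar hε hμ hμγ
  have : 0 < 1 - Real.exp (-(ε * γbar) / μ) := by linarith
  positivity

lemma truncLapPDF_nonneg (ε μ γbar : ℝ) (hε : 0 < ε) (hμ : 0 < μ) (hμγ : μ ≤ γbar) (x : ℝ) :
    0 ≤ truncLapPDF ε μ γbar x := by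
  unfold truncLapPDF
  split
  · exact mul_nonneg (tlC_pos ε μ γbar hε hμ hμγ).le (Real.exp_nonneg _)
  · exact le_refl 0

lemma truncLapPDF_measurable (ε μ γbar : ℝ) :
    Measurable (fun x => ENNReal.ofReal (truncLapPDF ε μ γbar x)) := by
  apply ENNReal.measurable_ofReal.comp
  unfold truncLapPDF
  apply Measurable.ite (measurableSet_le continuous_abs.measurable measurable_const)
  · fun_prop
  · fun_prop

lemma tl_setLIntegral (ε μ γbar : ℝ) (hε : 0 < ε) (hμ : 0 < μ) (hμγ : μ ≤ γbar)
    {a b : ℝ} (ha : 0 ≤ a) (hab : a ≤ b) (hbγ : b ≤ γbar) :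
    ∫⁻ x in Set.Ioc a b, ENNReal.ofReal (truncLapPDF ε μ γbar x) =
      ENNReal.ofReal ((Real.exp (-(ε * a) / μ) - Real.exp (-(ε * b) / μ)) /
        (2 * (1 - Real.exp (-(ε * γbar) / μ)))) := by
  set c := ε / (2 * μ * (1 - Real.exp (-(ε * γbar) / μ))) with hc
  have hcpos := tlC_pos ε μ γbar hε hμ hμγ
  have h1 : ∫⁻ x in Set.Ioc a b, ENNReal.ofReal (truncLapPDF ε μ γbar x) =
      ∫⁻ x in Set.Ioc a b, ENNReal.ofReal (c * Real.exp (-(ε * x) / μ)) := by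
    apply setLIntegral_congr_fun measurableSet_Ioc
    intro x hx
    have hx0 : 0 < x := lt_of_le_of_lt ha hx.1
    have hxb : |x| = x := abs_of_pos hx0
    dsimp only
    rw [truncLapPDF, if_pos (by rw [hxb]; exact hx.2.trans hbγ), hxb]
  rw [h1]
  have hcont : Continuous (fun x : ℝ => c * Real.exp (-(ε * x) / μ)) := by fun_prop
  rw [← ofReal_integral_eq_lintegral_ofReal
    (hcont.integrableOn_Ioc)
    (Filter.Eventually.of_forall fun x => by positivity)]
  congr 1
  rw [← intervalIntegral.integral_of_le hab]
  rw [intervalIntegral.integral_const_mul]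
  have hrw : ∀ x : ℝ, -(ε * x) / μ = (-(ε/μ)) * x := fun x => by field_simp
  simp_rw [hrw]
  rw [intervalIntegral.integral_comp_mul_left (fun x => Real.exp x)
    (neg_ne_zero.mpr (by positivity : (0:ℝ) < ε/μ).ne'), integral_exp, smul_eq_mul, hc]
  have hE : Real.exp (-(ε / μ) * γbar) < 1 := by
    have := tlExpLt ε μ γbar hε hμ hμγ
    rwa [hrw γbar] at this
  have hEne : 1 - Real.exp (-(ε / μ) * γbar) ≠ 0 := by linarith
  have hiμ : -(ε * γbar) / μ = -(ε / μ) * γbar := hrw γbar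
  rw [hiμ]
  have h3 : (-(ε/μ))⁻¹ = -(μ/ε) := by rw [inv_neg, inv_div]
  rw [h3]
  set D := 1 - Real.exp (-(ε / μ) * γbar) with hDdef
  field_simp [hEne, hμ.ne', hε.ne']
  ring

lemma tl_lintegral_neg (ε μ γbar : ℝ) {t : Set ℝ} (ht : MeasurableSet t) :
    ∫⁻ x in Neg.neg ⁻¹' t, ENNReal.ofReal (truncLapPDF ε μ γbar x) =
      ∫⁻ x in t, ENNReal.ofReal (truncLapPDF ε μ γbar x) := by
  set q := fun x => ENNReal.ofReal (truncLapPDF ε μ γbar x) with hq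
  have hqm : Measurable q := truncLapPDF_measurable ε μ γbar
  have hsym : ∀ x : ℝ, q (-x) = q x := by
    intro x; simp only [hq, truncLapPDF, abs_neg]
  rw [← lintegral_indicator ((ht.preimage measurable_neg)),
    ← lintegral_indicator ht]
  have h1 : ∀ x : ℝ, (Neg.neg ⁻¹' t).indicator q x = t.indicator q (-x) := by
    intro x
    by_cases h : -x ∈ t
    · rw [Set.indicator_of_mem h, Set.indicator_of_mem (by simpa using h), hsym]
    · rw [Set.indicator_of_notMem h, Set.indicator_of_notMem (by simpa using h)]
  refine (lintegral_congr (fun x => h1 x)).trans ?_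
  rw [← lintegral_map (hqm.indicator ht) measurable_neg, Measure.map_neg_eq_self]

lemma tl_total (ε μ γbar : ℝ) (hε : 0 < ε) (hμ : 0 < μ) (hμγ : μ ≤ γbar) :
    ∫⁻ x, ENNReal.ofReal (truncLapPDF ε μ γbar x) = 1 := by
  set q := fun x => ENNReal.ofReal (truncLapPDF ε μ γbar x) with hq
  have h0γ : 0 < γbar := lt_of_lt_of_le hμ hμγ
  have hE1 : Real.exp (-(ε * γbar) / μ) < 1 := tlExpLt ε μ γbar hε hμ hμγ
  have hind : q = (Set.Icc (-γbar) γbar).indicator q := by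
    funext x
    by_cases h : |x| ≤ γbar
    · rw [Set.indicator_of_mem (Set.mem_Icc.mpr (abs_le.mp h))]
    · rw [Set.indicator_of_notMem (fun hc => h (abs_le.mpr (Set.mem_Icc.mp hc)))]
      simp only [hq, truncLapPDF, if_neg h, ENNReal.ofReal_zero]
  calc ∫⁻ x, q x = ∫⁻ x, (Set.Icc (-γbar) γbar).indicator q x := by rw [← hind]
    _ = ∫⁻ x in Set.Icc (-γbar) γbar, q x := lintegral_indicator measurableSet_Icc _
    _ = ∫⁻ x in Set.Ioc (-γbar) γbar, q x := (setLIntegral_congr Ioc_ae_eq_Icc).symm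
    _ = ∫⁻ x in Set.Ioc (-γbar) 0 ∪ Set.Ioc 0 γbar, q x := by
        rw [Set.Ioc_union_Ioc_eq_Ioc (by linarith) h0γ.le]
    _ = (∫⁻ x in Set.Ioc (-γbar) 0, q x) + ∫⁻ x in Set.Ioc 0 γbar, q x := by
        rw [lintegral_union measurableSet_Ioc (Set.Ioc_disjoint_Ioc_of_le le_rfl)]
    _ = 1 := by
        have hneg : Set.Ioc (-γbar) 0 = Neg.neg ⁻¹' (Set.Ico 0 γbar) := by
          ext x
          simp only [Set.mem_Ioc, Set.mem_preimage, Set.mem_Ico]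
          constructor
          · rintro ⟨h1, h2⟩; constructor <;> linarith
          · rintro ⟨h1, h2⟩; constructor <;> linarith
        rw [hneg, tl_lintegral_neg ε μ γbar measurableSet_Ico,
          setLIntegral_congr Ico_ae_eq_Ioc,
          tl_setLIntegral ε μ γbar hε hμ hμγ le_rfl h0γ.le le_rfl]
        have hne : (1 : ℝ) - Real.exp (-(ε * γbar) / μ) ≠ 0 :=
          ne_of_gt (by linarith : (0:ℝ) < 1 - Real.exp (-(ε * γbar) / μ))
        rw [show -(ε * 0) / μ = 0 by ring, Real.exp_zero]
        rw [show (1 - Real.exp (-(ε * γbar) / μ)) / (2 * (1 - Real.exp (-(ε * γbar) / μ)))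
            = 1/2 by rw [div_eq_div_iff (mul_ne_zero two_ne_zero hne) two_ne_zero]; ring]
        rw [← ENNReal.ofReal_add (by norm_num) (by norm_num)]
        norm_num

lemma tl_isProb (ε μ γbar : ℝ) (hε : 0 < ε) (hμ : 0 < μ) (hμγ : μ ≤ γbar) :
    IsProbabilityMeasure
      (MeasureTheory.volume.withDensity (fun x => ENNReal.ofReal (truncLapPDF ε μ γbar x))) := by
  constructor
  rw [withDensity_apply _ MeasurableSet.univ, Measure.restrict_univ,
    tl_total ε μ γbar hε hμ hμγ]

lemma tl_tail_real (ε μ γbar : ℝ) (hε : 0 < ε) (hμ : 0 < μ) (hμγ : μ ≤ γbar)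
    {u : ℝ} (hu0 : 0 ≤ u) (huμ : u ≤ μ) :
    (Real.exp (-(ε * (γbar - u)) / μ) - Real.exp (-(ε * γbar) / μ)) /
        (2 * (1 - Real.exp (-(ε * γbar) / μ))) ≤
      (Real.exp ε - 1) / (2 * (Real.exp (ε * γbar / μ) - 1)) := by
  set E := Real.exp (-(ε * γbar) / μ) with hE
  have hE0 : 0 < E := Real.exp_pos _
  have hE1 : E < 1 := tlExpLt ε μ γbar hε hμ hμγ
  have h1 : Real.exp (ε * γbar / μ) = E⁻¹ := by
    rw [hE, show -(ε * γbar) / μ = -(ε * γbar / μ) by ring, Real.exp_neg, inv_inv]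
  have h2 : Real.exp (-(ε * (γbar - u)) / μ) = E * Real.exp (ε * u / μ) := by
    rw [hE, ← Real.exp_add]; congr 1; field_simp; ring
  rw [h1, h2]
  have hX : Real.exp (ε * u / μ) ≤ Real.exp ε := by
    apply Real.exp_le_exp.mpr
    rw [div_le_iff₀ hμ]
    nlinarith
  have hiE : E⁻¹ - 1 = (1 - E) / E := by field_simp
  rw [hiE, show (Real.exp ε - 1) / (2 * ((1 - E) / E)) =
      E * (Real.exp ε - 1) / (2 * (1 - E)) by
    field_simp]
  rw [div_le_div_iff₀ (by linarith) (by linarith)]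
  have h4 : E * Real.exp (ε * u / μ) ≤ E * Real.exp ε := by
    exact mul_le_mul_of_nonneg_left hX hE0.le
  nlinarith [mul_le_mul_of_nonneg_right h4 (by linarith : (0:ℝ) ≤ 2 * (1 - E))]

lemma tl_oneDim (ε μ γbar : ℝ) (hε : 0 < ε) (hμ : 0 < μ) (hμγ : μ ≤ γbar)
    {s : ℝ} (hs : |s| ≤ μ) {C : Set ℝ} (hC : MeasurableSet C) :
    (MeasureTheory.volume.withDensity (fun x => ENNReal.ofReal (truncLapPDF ε μ γbar x)))
        ((fun z => z + s) ⁻¹' C) ≤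
      ENNReal.ofReal (Real.exp ε) *
        (MeasureTheory.volume.withDensity
          (fun x => ENNReal.ofReal (truncLapPDF ε μ γbar x))) C +
      ENNReal.ofReal ((Real.exp ε - 1) / (2 * (Real.exp (ε * γbar / μ) - 1))) := by
  set q := fun x => ENNReal.ofReal (truncLapPDF ε μ γbar x) with hq
  have hqm : Measurable q := truncLapPDF_measurable ε μ γbar
  have hcpos := tlC_pos ε μ γbar hε hμ hμγ
  set B := {z : ℝ | |z| ≤ γbar ∧ γbar < |z + s|} with hB
  have hBm : MeasurableSet B := by
    apply MeasurableSet.inter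
    · exact measurableSet_le continuous_abs.measurable measurable_const
    · exact measurableSet_lt measurable_const
        ((continuous_id.add continuous_const).abs.measurable)
  -- pointwise bound
  have hpoint : ∀ w : ℝ, q (w - s) ≤ ENNReal.ofReal (Real.exp ε) * q w
      + B.indicator q (w - s) := by
    intro w
    by_cases h1 : |w - s| ≤ γbar
    · by_cases h2 : |w| ≤ γbar
      · refine le_trans ?_ (le_add_right le_rfl)
        set c := ε / (2 * μ * (1 - Real.exp (-(ε * γbar) / μ))) with hc
        have e1 : q (w - s) = ENNReal.ofReal (c * Real.exp (-(ε * |w - s|) / μ)) := by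
          simp only [hq, truncLapPDF, if_pos h1, hc]
        have e2 : q w = ENNReal.ofReal (c * Real.exp (-(ε * |w|) / μ)) := by
          simp only [hq, truncLapPDF, if_pos h2, hc]
        rw [e1, e2, ← ENNReal.ofReal_mul (Real.exp_nonneg ε)]
        apply ENNReal.ofReal_le_ofReal
        have habs : |w| - |w - s| ≤ μ := by
          have h := abs_sub_abs_le_abs_sub w (w - s)
          rw [show w - (w - s) = s by ring] at h
          linarith
        have hexp : -(ε * |w - s|) / μ ≤ ε + -(ε * |w|) / μ := by
          rw [show ε + -(ε * |w|) / μ = (ε * μ - ε * |w|) / μ by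
            field_simp; ring,
            div_le_div_iff₀ hμ hμ]
          nlinarith [mul_le_mul_of_nonneg_right
            (mul_le_mul_of_nonneg_left habs hε.le) hμ.le]
        calc c * Real.exp (-(ε * |w - s|) / μ)
            ≤ c * Real.exp (ε + -(ε * |w|) / μ) :=
              mul_le_mul_of_nonneg_left (Real.exp_le_exp.mpr hexp) hcpos.le
          _ = Real.exp ε * (c * Real.exp (-(ε * |w|) / μ)) := by
              rw [Real.exp_add]; ring
      · have hmem : w - s ∈ B := by
          refine ⟨h1, ?_⟩
          rw [sub_add_cancel]
          exact lt_of_not_ge h2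
        rw [Set.indicator_of_mem hmem]
        exact le_add_left le_rfl
    · have hz : q (w - s) = 0 := by
        simp only [hq, truncLapPDF, if_neg h1, ENNReal.ofReal_zero]
      rw [hz]
      exact zero_le
  -- tail bound
  have htail : ∫⁻ z in B, q z ≤
      ENNReal.ofReal ((Real.exp ε - 1) / (2 * (Real.exp (ε * γbar / μ) - 1))) := by
    have hsμ : s ≤ μ := le_trans (le_abs_self s) hs
    have hsμ' : -s ≤ μ := le_trans (neg_le_abs s) hs
    rcases le_or_gt 0 s with hs0 | hs0
    · have hsub : B ⊆ Set.Ioc (γbar - s) γbar := by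
        rintro z ⟨hz1, hz2⟩
        have h1 := abs_le.mp hz1
        rcases lt_abs.mp hz2 with h | h
        · exact ⟨by linarith, h1.2⟩
        · exfalso; linarith
      calc ∫⁻ z in B, q z ≤ ∫⁻ z in Set.Ioc (γbar - s) γbar, q z :=
            lintegral_mono' (Measure.restrict_mono hsub le_rfl) le_rfl
        _ = ENNReal.ofReal ((Real.exp (-(ε * (γbar - s)) / μ) - Real.exp (-(ε * γbar) / μ)) /
              (2 * (1 - Real.exp (-(ε * γbar) / μ)))) :=
            tl_setLIntegral ε μ γbar hε hμ hμγ (by linarith) (by linarith) le_rfl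
        _ ≤ _ := ENNReal.ofReal_le_ofReal
            (tl_tail_real ε μ γbar hε hμ hμγ hs0 hsμ)
    · have hsub : B ⊆ Neg.neg ⁻¹' Set.Ioc (γbar - (-s)) γbar := by
        rintro z ⟨hz1, hz2⟩
        have h1 := abs_le.mp hz1
        simp only [Set.mem_preimage, Set.mem_Ioc]
        rcases lt_abs.mp hz2 with h | h
        · exfalso; linarith
        · exact ⟨by linarith, by linarith⟩
      calc ∫⁻ z in B, q z ≤ ∫⁻ z in Neg.neg ⁻¹' Set.Ioc (γbar - (-s)) γbar, q z :=
            lintegral_mono' (Measure.restrict_mono hsub le_rfl) le_rfl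
        _ = ∫⁻ z in Set.Ioc (γbar - (-s)) γbar, q z :=
            tl_lintegral_neg ε μ γbar measurableSet_Ioc
        _ = ENNReal.ofReal ((Real.exp (-(ε * (γbar - (-s)))/ μ) - Real.exp (-(ε * γbar) / μ)) /
              (2 * (1 - Real.exp (-(ε * γbar) / μ)))) :=
            tl_setLIntegral ε μ γbar hε hμ hμγ (by linarith) (by linarith) le_rfl
        _ ≤ _ := ENNReal.ofReal_le_ofReal
            (tl_tail_real ε μ γbar hε hμ hμγ (by linarith) hsμ')
  -- main chain
  have hT : MeasurableSet ((fun z => z + s) ⁻¹' C) := hC.preimage (measurable_add_const s)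
  have hstep1 : ∫⁻ z in (fun z => z + s) ⁻¹' C, q z = ∫⁻ w in C, q (w - s) := by
    rw [← lintegral_indicator hT, ← lintegral_indicator hC]
    have h1 : ∀ z : ℝ, ((fun z => z + s) ⁻¹' C).indicator q z
        = (C.indicator fun w => q (w - s)) (z + s) := by
      intro z
      by_cases h : z + s ∈ C
      · rw [Set.indicator_of_mem (show z ∈ (fun z => z + s) ⁻¹' C from h),
          Set.indicator_of_mem h, add_sub_cancel_right]
      · rw [Set.indicator_of_notMem (show z ∉ (fun z => z + s) ⁻¹' C from fun hc => h hc),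
          Set.indicator_of_notMem h]
    simp_rw [h1]
    exact lintegral_add_right_eq_self _ s
  have hstep2 : ∫⁻ w, B.indicator q (w - s) = ∫⁻ z in B, q z := by
    rw [← lintegral_indicator hBm]
    simp_rw [sub_eq_add_neg]
    exact lintegral_add_right_eq_self _ (-s)
  rw [withDensity_apply _ hT, withDensity_apply _ hC, hstep1]
  calc ∫⁻ w in C, q (w - s)
      ≤ ∫⁻ w in C, (ENNReal.ofReal (Real.exp ε) * q w + B.indicator q (w - s)) :=
        lintegral_mono fun w => hpoint w
    _ = ENNReal.ofReal (Real.exp ε) * (∫⁻ w in C, q w)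
          + ∫⁻ w in C, B.indicator q (w - s) := by
        rw [lintegral_add_left (hqm.const_mul _), lintegral_const_mul _ hqm]
    _ ≤ ENNReal.ofReal (Real.exp ε) * (∫⁻ w in C, q w)
          + ENNReal.ofReal ((Real.exp ε - 1) / (2 * (Real.exp (ε * γbar / μ) - 1))) := by
        apply add_le_add_right
        calc ∫⁻ w in C, B.indicator q (w - s)
            ≤ ∫⁻ w, B.indicator q (w - s) :=
              lintegral_mono' Measure.restrict_le_self le_rfl
          _ = ∫⁻ z in B, q z := hstep2
          _ ≤ _ := htail

/-- truncated Laplacian mechanism. Let `ε > 0`, `0 < μ ≤ γ̄`, and set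
`δ = (e^ε - 1)/(2(e^{εγ̄/μ} - 1))`. Let `γ` be a random vector in `ℝ^k` with independent
coordinates, each distributed according to the truncated Laplacian density (that is,
having law `volume.withDensity p` with `p` the truncated Laplacian pdf). Then for every
pair `θ, θ'` that differ in at most one coordinate and satisfy `‖θ - θ'‖₁ ≤ μ`, and every
Borel set `S ⊆ ℝ^k`, `P(θ + γ ∈ S) ≤ e^ε P(θ' + γ ∈ S) + δ`. -/
theorem stmt14 (ε μ γbar : ℝ) (hε : 0 < ε) (hμ : 0 < μ) (hμγ : μ ≤ γbar)
    (δ : ℝ) (hδ : δ = (Real.exp ε - 1) / (2 * (Real.exp (ε * γbar / μ) - 1)))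
    (k : ℕ) (hk : 0 < k)
    {Ω : Type*} [MeasurableSpace Ω] (P : Measure Ω) [IsProbabilityMeasure P]
    (γ : Ω → Fin k → ℝ)
    (hindep : iIndepFun (fun i ω => γ ω i) P)
    (hlaw : ∀ i, Measure.map (fun ω => γ ω i) P =
      MeasureTheory.volume.withDensity (fun x => ENNReal.ofReal (truncLapPDF ε μ γbar x)))
    (θ θ' : Fin k → ℝ)
    (hadj0 : {i | θ i ≠ θ' i}.Subsingleton)
    (hadj1 : ∑ i, |θ i - θ' i| ≤ μ)
    (S : Set (Fin k → ℝ)) (hS : MeasurableSet S) :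
    P {ω | θ + γ ω ∈ S} ≤
      ENNReal.ofReal (Real.exp ε) * P {ω | θ' + γ ω ∈ S} + ENNReal.ofReal δ := by
  have hlaw' : ∀ i, Measure.map (fun ω => γ ω i) P =
      MeasureTheory.volume.withDensity (fun x => ENNReal.ofReal (truncLapPDF ε μ γbar x)) := hlaw
  set ν : Measure ℝ :=
    MeasureTheory.volume.withDensity (fun x => ENNReal.ofReal (truncLapPDF ε μ γbar x)) with hνdef
  haveI hPν : IsProbabilityMeasure ν := tl_isProb ε μ γbar hε hμ hμγ
  -- the distinguished index
  obtain ⟨i₀, hi₀⟩ : ∃ i₀ : Fin k, ∀ i, i ≠ i₀ → θ i = θ' i := by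
    by_cases hne : ∃ i, θ i ≠ θ' i
    · obtain ⟨j, hj⟩ := hne
      exact ⟨j, fun i hij => by
        by_contra hcon
        exact hij (hadj0 hcon hj)⟩
    · push_neg at hne
      exact ⟨⟨0, hk⟩, fun i _ => hne i⟩
  set s := θ i₀ - θ' i₀ with hsdef
  have hsμ : |s| ≤ μ := by
    refine le_trans ?_ hadj1
    have h := Finset.single_le_sum (f := fun i => |θ i - θ' i|)
      (fun i _ => abs_nonneg _) (Finset.mem_univ i₀)
    simpa using h
  -- measurability
  have hmeas : ∀ i, AEMeasurable (fun ω => γ ω i) P := by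
    intro i
    by_contra hcon
    have h0 : Measure.map (fun ω => γ ω i) P = 0 := Measure.map_of_not_aemeasurable hcon
    have h1 : ν Set.univ = 1 := measure_univ
    rw [← hlaw' i, h0] at h1
    simp at h1
  have hγae : AEMeasurable γ P := by
    refine ⟨fun ω i => (hmeas i).mk _ ω,
      measurable_pi_iff.mpr fun i => (hmeas i).measurable_mk, ?_⟩
    filter_upwards [ae_all_iff.mpr fun i => (hmeas i).ae_eq_mk] with ω hω
    funext i
    exact hω i
  -- the joint law is the product measure
  have hmap : Measure.map γ P = Measure.pi (fun _ : Fin k => ν) := by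
    refine (Measure.pi_eq fun sets hsets => ?_).symm
    rw [Measure.map_apply_of_aemeasurable hγae (MeasurableSet.univ_pi hsets)]
    have hpre : γ ⁻¹' Set.pi Set.univ sets = ⋂ i ∈ Finset.univ, (fun ω => γ ω i) ⁻¹' sets i := by
      ext ω; simp [Set.mem_pi]
    rw [hpre, hindep.measure_inter_preimage_eq_mul Finset.univ (fun i _ => hsets i)]
    exact Finset.prod_congr rfl fun i _ => by
      rw [← hlaw' i, Measure.map_apply_of_aemeasurable (hmeas i) (hsets i)]
  -- the shifted sets
  set A := (fun x : Fin k → ℝ => θ + x) ⁻¹' S with hA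
  set A' := (fun x : Fin k → ℝ => θ' + x) ⁻¹' S with hA'
  have haddm : ∀ t : Fin k → ℝ, Measurable (fun x : Fin k → ℝ => t + x) :=
    fun t => measurable_const_add t
  have hAm : MeasurableSet A := hS.preimage (haddm θ)
  have hA'm : MeasurableSet A' := hS.preimage (haddm θ')
  have hPA : P {ω | θ + γ ω ∈ S} = Measure.pi (fun _ : Fin k => ν) A := by
    rw [show {ω | θ + γ ω ∈ S} = γ ⁻¹' A from rfl,
      ← Measure.map_apply_of_aemeasurable hγae hAm, hmap]
  have hPA' : P {ω | θ' + γ ω ∈ S} = Measure.pi (fun _ : Fin k => ν) A' := by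
    rw [show {ω | θ' + γ ω ∈ S} = γ ⁻¹' A' from rfl,
      ← Measure.map_apply_of_aemeasurable hγae hA'm, hmap]
  rw [hPA, hPA', hδ]
  -- decompose the product measure at coordinate i₀
  set p' : Fin k → Prop := fun i => i ≠ i₀ with hp'
  letI hU : Unique {i // ¬ p' i} :=
    ⟨⟨⟨i₀, fun h => h rfl⟩⟩, fun j => Subtype.ext (not_not.mp j.2)⟩
  letI hFt : Fintype {i // ¬ p' i} := Subtype.fintype _
  set mrest : Measure (∀ _ : {i // p' i}, ℝ) := Measure.pi (fun _ => ν) with hmrest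
  set F : (Fin k → ℝ) → ((∀ _ : {i // p' i}, ℝ) × ℝ) :=
    fun x => (fun j => x j.1, x i₀) with hF
  have hmp : MeasurePreserving F (Measure.pi fun _ : Fin k => ν) (mrest.prod ν) := by
    have h1 := measurePreserving_piEquivPiSubtypeProd (fun _ : Fin k => ν) p'
    have h2 := (MeasurePreserving.id mrest).prod
      (measurePreserving_funUnique ν {i // ¬ p' i})
    have hpieq : (@Measure.pi {i // ¬ p' i} (fun _ => ℝ) (Subtype.fintype _)
        (fun _ => Real.measurableSpace) fun _ => ν)
        = (@Measure.pi {i // ¬ p' i} (fun _ => ℝ) Unique.fintype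
          (fun _ => Real.measurableSpace) fun _ => ν) :=
      congrArg (fun inst : Fintype {i // ¬ p' i} =>
        @Measure.pi _ _ inst (fun _ => Real.measurableSpace) fun _ => ν)
        (Subsingleton.elim _ _)
    rw [hpieq] at h1
    have h3 := h2.comp h1
    have hFeq : (Prod.map (id : (∀ _ : {i // p' i}, ℝ) → _)
        (MeasurableEquiv.funUnique {i // ¬ p' i} ℝ) ∘
        (MeasurableEquiv.piEquivPiSubtypeProd (fun _ : Fin k => ℝ) p')) = F := by
      rw [hF]; rfl
    rwa [hFeq] at h3
  set G : ((∀ _ : {i // p' i}, ℝ) × ℝ) → (Fin k → ℝ) :=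
    fun yz => fun i => if h : p' i then yz.1 ⟨i, h⟩ else yz.2 with hG
  have hGm : Measurable G := by
    apply measurable_pi_lambda
    intro i
    by_cases h : p' i
    · simp only [hG, dif_pos h]
      exact (measurable_pi_apply _).comp measurable_fst
    · simp only [hG, dif_neg h]
      exact measurable_snd
  have hGF : ∀ x : Fin k → ℝ, G (F x) = x := by
    intro x
    funext i
    by_cases h : p' i
    · simp only [hG, hF, dif_pos h]
    · simp only [hG, hF, dif_neg h]
      rw [not_not.mp h]
  have hkey : ∀ {T : Set (Fin k → ℝ)}, MeasurableSet T →
      (Measure.pi fun _ : Fin k => ν) T = (mrest.prod ν) (G ⁻¹' T) := by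
    intro T hT
    have h1 : T = F ⁻¹' (G ⁻¹' T) := by
      ext x
      simp [Set.mem_preimage, hGF x]
    conv_lhs => rw [h1]
    exact hmp.measure_preimage ((hT.preimage hGm).nullMeasurableSet)
  -- slice identity
  have hθG : ∀ (y : ∀ _ : {i // p' i}, ℝ) (z : ℝ), θ + G (y, z) = θ' + G (y, z + s) := by
    intro y z
    funext i
    simp only [Pi.add_apply]
    by_cases h : p' i
    · simp only [hG, dif_pos h]
      rw [hi₀ i h]
    · simp only [hG, dif_neg h]
      rw [not_not.mp h, hsdef]
      ring
  have hslice : ∀ y, Prod.mk y ⁻¹' (G ⁻¹' A) =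
      (fun z => z + s) ⁻¹' (Prod.mk y ⁻¹' (G ⁻¹' A')) := by
    intro y
    ext z
    simp only [Set.mem_preimage, hA, hA']
    rw [hθG y z]
  have hGA : MeasurableSet (G ⁻¹' A) := hAm.preimage hGm
  have hGA' : MeasurableSet (G ⁻¹' A') := hA'm.preimage hGm
  rw [hkey hAm, hkey hA'm, Measure.prod_apply hGA, Measure.prod_apply hGA']
  calc ∫⁻ y, ν (Prod.mk y ⁻¹' (G ⁻¹' A)) ∂mrest
      ≤ ∫⁻ y, (ENNReal.ofReal (Real.exp ε) * ν (Prod.mk y ⁻¹' (G ⁻¹' A'))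
          + ENNReal.ofReal ((Real.exp ε - 1) / (2 * (Real.exp (ε * γbar / μ) - 1)))) ∂mrest := by
        apply lintegral_mono
        intro y
        dsimp only
        rw [hslice y]
        exact tl_oneDim ε μ γbar hε hμ hμγ hsμ (hGA'.preimage measurable_prodMk_left)
    _ = ENNReal.ofReal (Real.exp ε) * ∫⁻ y, ν (Prod.mk y ⁻¹' (G ⁻¹' A')) ∂mrest
          + ENNReal.ofReal ((Real.exp ε - 1) / (2 * (Real.exp (ε * γbar / μ) - 1))) := by
        rw [lintegral_add_right _ measurable_const,
          lintegral_const_mul _ (measurable_measure_prodMk_left hGA'),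
          lintegral_const, measure_univ, mul_one]
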